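/- arXiv:2008.07197 — 2 statements merged into one kernel-verified Lean document; each statement's English description precedes it below -/
import Mathlib

section
/- Let n ≥ 1 and let {V_i}_{i∈I} and {W_j}_{j∈J} be nonempty finite families of finite subsets of ℝⁿ (the vertex sets of the ∘-polytopes and ∙-polytopes of a dual n-dimer) satisfying: (a) distinct points of ⋃_i V_i are incongruent modulo ℤⁿ, and likewise distinct points of ⋃_j W_j are incongruent modulo ℤⁿ; (b) the images of ⋃_i V_i and of ⋃_j W_j in ℝⁿ/ℤⁿ coincide; (c) whenever p ∈ V_i and p' ∈ W_j satisfy p ≡ p' (mod ℤⁿ), the set of unit vectors (q−p)/‖q−p‖, as q ranges over the edge-neighbors of p in V_i, equals the set of unit vectors −(q'−p')/‖q'−p'‖, as q' ranges over the edge-neighbors of p' in W_j. Then every edge of every polytope of the dual dimer has rational slope: for every i and every edge-neighbor pair p, q in V_i there exist a nonzero integer vector m ∈ ℤⁿ and a real number t with q − p = t·m (and likewise for the W_j). -/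
/-- Two points of `ℝⁿ` are congruent modulo `ℤⁿ` if their difference has integer
coordinates. -/
def CongModZn {n : ℕ} (x y : EuclideanSpace ℝ (Fin n)) : Prop :=
  ∀ k : Fin n, ∃ m : ℤ, x k - y k = (m : ℝ)

/-- `q` is an edge-neighbor of `p` in the finite set `V ⊂ ℝⁿ`: both are in `V`,
they are distinct, and the closed segment `[p,q]` is an extreme subset (a face)
of the convex hull of `V`, i.e. an edge of the polytope `conv V`. -/
def IsEdgeNeighbor {n : ℕ} (V : Set (EuclideanSpace ℝ (Fin n)))
    (p q : EuclideanSpace ℝ (Fin n)) : Prop :=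
  p ∈ V ∧ q ∈ V ∧ p ≠ q ∧ IsExtreme ℝ (convexHull ℝ V) (segment ℝ p q)

/-- The set of unit vectors pointing from `p` towards its edge-neighbors in `V`. -/
def EdgeDirections {n : ℕ} (V : Set (EuclideanSpace ℝ (Fin n)))
    (p : EuclideanSpace ℝ (Fin n)) : Set (EuclideanSpace ℝ (Fin n)) :=
  {u | ∃ q, IsEdgeNeighbor V p q ∧ u = ‖q - p‖⁻¹ • (q - p)}

/-- Edge-neighborliness is symmetric. -/
lemma DualDimer.edge_symm {n : ℕ} {V : Set (EuclideanSpace ℝ (Fin n))} {p q}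
    (h : IsEdgeNeighbor V p q) : IsEdgeNeighbor V q p :=
  ⟨h.2.1, h.1, h.2.2.1.symm, segment_symm ℝ p q ▸ h.2.2.2⟩

/-- If `u` is the direction of the edge `p → q`, then `-u` is an edge direction at `q`. -/
lemma DualDimer.neg_mem_edgeDir {n : ℕ} {V : Set (EuclideanSpace ℝ (Fin n))} {p q u}
    (h : IsEdgeNeighbor V p q) (hu : u = ‖q - p‖⁻¹ • (q - p)) :
    -u ∈ EdgeDirections V q := by
  refine ⟨p, DualDimer.edge_symm h, ?_⟩
  rw [hu, norm_sub_rev, show p - q = -(q - p) from (neg_sub q p).symm, smul_neg]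

/-- Coordinatewise form of the direction relation. -/
lemma DualDimer.coord_eq {n : ℕ} {p q u : EuclideanSpace ℝ (Fin n)}
    (hne : p ≠ q) (hu : u = ‖q - p‖⁻¹ • (q - p)) (k : Fin n) :
    q k - p k = ‖q - p‖ * u k := by
  have hnz : ‖q - p‖ ≠ 0 := norm_ne_zero_iff.2 (sub_ne_zero.2 hne.symm)
  have := congrArg (fun x : EuclideanSpace ℝ (Fin n) => x k) hu
  simp only [PiLp.smul_apply, PiLp.sub_apply, smul_eq_mul] at this
  rw [this]
  field_simp

/-- Every edge of every polytope of a dual `n`-dimer has rational slope. -/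
theorem dual_dimer_edges_rational_slope
    {n : ℕ} (hn : 1 ≤ n) {I J : Type*} [Nonempty I] [Nonempty J] [Finite I] [Finite J]
    (V : I → Set (EuclideanSpace ℝ (Fin n))) (W : J → Set (EuclideanSpace ℝ (Fin n)))
    (hVfin : ∀ i, (V i).Finite) (hWfin : ∀ j, (W j).Finite)
    -- (a) distinct points of each vertex family are incongruent mod ℤⁿ
    (haV : ∀ x ∈ ⋃ i, V i, ∀ y ∈ ⋃ i, V i, CongModZn x y → x = y)
    (haW : ∀ x ∈ ⋃ j, W j, ∀ y ∈ ⋃ j, W j, CongModZn x y → x = y)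
    -- (b) the images of the two vertex families in ℝⁿ/ℤⁿ coincide
    (hbVW : ∀ x ∈ ⋃ i, V i, ∃ y ∈ ⋃ j, W j, CongModZn x y)
    (hbWV : ∀ y ∈ ⋃ j, W j, ∃ x ∈ ⋃ i, V i, CongModZn x y)
    -- (c) at matched vertices, edge directions of ∙-polytopes are opposite to
    -- those of ∘-polytopes
    (hc : ∀ i j p p', p ∈ V i → p' ∈ W j → CongModZn p p' →
      EdgeDirections (V i) p = (fun u => -u) '' EdgeDirections (W j) p') :
    (∀ i p q, IsEdgeNeighbor (V i) p q →
      ∃ m : Fin n → ℤ, m ≠ 0 ∧ ∃ t : ℝ, ∀ k, q k - p k = t * (m k : ℝ)) ∧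
    (∀ j p q, IsEdgeNeighbor (W j) p q →
      ∃ m : Fin n → ℤ, m ≠ 0 ∧ ∃ t : ℝ, ∀ k, q k - p k = t * (m k : ℝ)) := by
  classical
  -- Key claim: any edge direction appearing in the `V` family is a positive
  -- multiple of an integer vector.
  have key : ∀ u : EuclideanSpace ℝ (Fin n),
      (∃ i, ∃ v ∈ V i, u ∈ EdgeDirections (V i) v) →
      ∃ s : ℝ, 0 < s ∧ ∀ k, ∃ m : ℤ, s * u k = (m : ℝ) := by
    rintro u ⟨i0, v0, hv0, hu0⟩
    -- The chain step: from a vertex of the V-family with edge direction `u`,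
    -- walk along that edge, jump to the matching W-vertex, walk along its
    -- `u`-edge, and jump back to a matching V-vertex; the net displacement is
    -- `ℓ • u` modulo `ℤⁿ` with `ℓ > 0`, and `u` is again an edge direction.
    have stepV : ∀ (i : I) (v : EuclideanSpace ℝ (Fin n)), v ∈ V i →
        u ∈ EdgeDirections (V i) v →
        ∃ (i' : I) (v' : EuclideanSpace ℝ (Fin n)), v' ∈ V i' ∧
          u ∈ EdgeDirections (V i') v' ∧
          ∃ ℓ : ℝ, 0 < ℓ ∧ ∀ k, ∃ m : ℤ, v' k - (v k + ℓ * u k) = (m : ℝ) := by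
      intro i v hv hu
      obtain ⟨q, hq, hqu⟩ := hu
      have hnegu : -u ∈ EdgeDirections (V i) q := DualDimer.neg_mem_edgeDir hq hqu
      obtain ⟨q', hq'W, hqq'⟩ := hbVW q (Set.mem_iUnion.2 ⟨i, hq.2.1⟩)
      obtain ⟨j, hq'⟩ := Set.mem_iUnion.1 hq'W
      have hEq := hc i j q q' hq.2.1 hq' hqq'
      have huq' : u ∈ EdgeDirections (W j) q' := by
        rw [hEq] at hnegu
        obtain ⟨w, hw, hww⟩ := hnegu
        have : w = u := neg_injective hww
        rwa [this] at hw
      obtain ⟨r, hr, hru⟩ := huq'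
      have hnegur : -u ∈ EdgeDirections (W j) r := DualDimer.neg_mem_edgeDir hr hru
      obtain ⟨v', hv'V, hv'r⟩ := hbWV r (Set.mem_iUnion.2 ⟨j, hr.2.1⟩)
      obtain ⟨i', hv'⟩ := Set.mem_iUnion.1 hv'V
      have huv' : u ∈ EdgeDirections (V i') v' := by
        rw [hc i' j v' r hv' hr.2.1 hv'r]
        exact ⟨-u, hnegur, neg_neg u⟩
      have hL1 : (0:ℝ) < ‖q - v‖ := norm_pos_iff.2 (sub_ne_zero.2 hq.2.2.1.symm)
      have hL2 : (0:ℝ) < ‖r - q'‖ := norm_pos_iff.2 (sub_ne_zero.2 hr.2.2.1.symm)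
      refine ⟨i', v', hv', huv', ‖q - v‖ + ‖r - q'‖, by positivity, ?_⟩
      intro k
      obtain ⟨m1, hm1⟩ := hqq' k
      obtain ⟨m2, hm2⟩ := hv'r k
      have e1 : q k - v k = ‖q - v‖ * u k := DualDimer.coord_eq hq.2.2.1 hqu k
      have e2 : r k - q' k = ‖r - q'‖ * u k := DualDimer.coord_eq hr.2.2.1 hru k
      exact ⟨m2 - m1, by push_cast; linarith [hm1, hm2, e1, e2]⟩
    -- Package the invariant into a subtype and iterate the step with choice.
    let T := {x : I × EuclideanSpace ℝ (Fin n) // x.2 ∈ V x.1 ∧ u ∈ EdgeDirections (V x.1) x.2}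
    have step' : ∀ t : T, ∃ (t' : T) (ℓ : ℝ), 0 < ℓ ∧
        ∀ k, ∃ m : ℤ, t'.1.2 k - (t.1.2 k + ℓ * u k) = (m : ℝ) := by
      intro t
      obtain ⟨i', v', hv', huv', ℓ, hℓ, hcg⟩ := stepV t.1.1 t.1.2 t.2.1 t.2.2
      exact ⟨⟨(i', v'), hv', huv'⟩, ℓ, hℓ, hcg⟩
    choose f ℓf hℓf hcf using step'
    set t0 : T := ⟨(i0, v0), hv0, hu0⟩ with ht0
    set seq : ℕ → T := fun k => f^[k] t0 with hseq
    set L : ℕ → ℝ := fun k => ∑ j ∈ Finset.range k, ℓf (seq j) with hLdef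
    have hLsucc : ∀ k, L (k + 1) = L k + ℓf (seq k) := by
      intro k; simp [hLdef, Finset.sum_range_succ]
    have hLmono : StrictMono L := by
      apply strictMono_nat_of_lt_succ
      intro k
      rw [hLsucc k]
      linarith [hℓf (seq k)]
    have hseqsucc : ∀ k, seq (k + 1) = f (seq k) := by
      intro k; simp [hseq, Function.iterate_succ_apply']
    have hcong : ∀ k j, ∃ m : ℤ, (seq k).1.2 j - (v0 j + L k * u j) = (m : ℝ) := by
      intro k
      induction k with
      | zero =>
        intro j
        refine ⟨0, ?_⟩
        simp [hseq, hLdef, ht0]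
      | succ k ih =>
        intro j
        obtain ⟨m1, hm1⟩ := ih j
        obtain ⟨m2, hm2⟩ := hcf (seq k) j
        rw [hseqsucc k] at *
        refine ⟨m2 + m1, ?_⟩
        rw [hLsucc k]
        push_cast
        linarith [hm1, hm2]
    -- Pigeonhole on the finite vertex set.
    have hfin : (⋃ i, V i).Finite := Set.finite_iUnion hVfin
    haveI := hfin.to_subtype
    let g : ℕ → ↥(⋃ i, V i) := fun k =>
      ⟨(seq k).1.2, Set.mem_iUnion.2 ⟨(seq k).1.1, (seq k).2.1⟩⟩
    obtain ⟨a, b, hab, heq⟩ := Finite.exists_ne_map_eq_of_infinite g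
    have main : ∀ a b : ℕ, a < b → (seq a).1.2 = (seq b).1.2 →
        ∃ s : ℝ, 0 < s ∧ ∀ k, ∃ m : ℤ, s * u k = (m : ℝ) := by
      intro a b hlt hvv
      refine ⟨L b - L a, by linarith [hLmono hlt], ?_⟩
      intro k
      obtain ⟨m1, hm1⟩ := hcong a k
      obtain ⟨m2, hm2⟩ := hcong b k
      rw [hvv] at hm1
      exact ⟨m1 - m2, by push_cast; linarith [hm1, hm2]⟩
    have hvv : (seq a).1.2 = (seq b).1.2 := congrArg Subtype.val heq
    rcases hab.lt_or_gt with h | h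
    · exact main a b h hvv
    · exact main b a h hvv.symm
  constructor
  · -- edges of the ∘-polytopes
    intro i p q hpq
    set u : EuclideanSpace ℝ (Fin n) := ‖q - p‖⁻¹ • (q - p) with hudef
    have hu : u ∈ EdgeDirections (V i) p := ⟨q, hpq, rfl⟩
    obtain ⟨s, hs, hsm⟩ := key u ⟨i, p, hpq.1, hu⟩
    choose m hm using hsm
    have hnorm : (0:ℝ) < ‖q - p‖ := norm_pos_iff.2 (sub_ne_zero.2 hpq.2.2.1.symm)
    have hune : u ≠ 0 := smul_ne_zero (inv_ne_zero hnorm.ne') (sub_ne_zero.2 hpq.2.2.1.symm)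
    refine ⟨m, ?_, ‖q - p‖ / s, ?_⟩
    · intro hm0
      apply hune
      ext k
      have := hm k
      rw [hm0] at this
      simp only [Pi.zero_apply, Int.cast_zero] at this
      have : u k = 0 := by
        rcases mul_eq_zero.1 this with h | h
        · exact absurd h hs.ne'
        · exact h
      simpa using this
    · intro k
      have e1 : q k - p k = ‖q - p‖ * u k := DualDimer.coord_eq hpq.2.2.1 hudef k
      have e2 := hm k
      field_simp
      nlinarith [e1, e2]
  · -- edges of the ∙-polytopes
    intro j p' q' hpq
    set u : EuclideanSpace ℝ (Fin n) := ‖q' - p'‖⁻¹ • (q' - p') with hudef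
    have hu : u ∈ EdgeDirections (W j) p' := ⟨q', hpq, rfl⟩
    obtain ⟨p, hpV, hpp'⟩ := hbWV p' (Set.mem_iUnion.2 ⟨j, hpq.1⟩)
    obtain ⟨i, hpVi⟩ := Set.mem_iUnion.1 hpV
    have hnegu : -u ∈ EdgeDirections (V i) p := by
      rw [hc i j p p' hpVi hpq.1 hpp']
      exact ⟨u, hu, rfl⟩
    obtain ⟨s, hs, hsm⟩ := key (-u) ⟨i, p, hpVi, hnegu⟩
    have hsm' : ∀ k, ∃ m : ℤ, s * u k = (m : ℝ) := by
      intro k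
      obtain ⟨m, hm⟩ := hsm k
      refine ⟨-m, ?_⟩
      have : (-u) k = -(u k) := by simp
      rw [this] at hm
      push_cast
      linarith [hm]
    choose m hm using hsm'
    have hnorm : (0:ℝ) < ‖q' - p'‖ := norm_pos_iff.2 (sub_ne_zero.2 hpq.2.2.1.symm)
    have hune : u ≠ 0 := smul_ne_zero (inv_ne_zero hnorm.ne') (sub_ne_zero.2 hpq.2.2.1.symm)
    refine ⟨m, ?_, ‖q' - p'‖ / s, ?_⟩
    · intro hm0
      apply hune
      ext k
      have := hm k
      rw [hm0] at this
      simp only [Pi.zero_apply, Int.cast_zero] at this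
      have : u k = 0 := by
        rcases mul_eq_zero.1 this with h | h
        · exact absurd h hs.ne'
        · exact h
      simpa using this
    · intro k
      have e1 : q' k - p' k = ‖q' - p'‖ * u k := DualDimer.coord_eq hpq.2.2.1 hudef k
      have e2 := hm k
      field_simp
      nlinarith [e1, e2]
end

section
/- For nonzero complex numbers w₁ and w₂, the 3×3 complex matrix M = [[w₂, (w₁w₂)⁻¹, w₁], [(w₁w₂)⁻¹, w₁, w₂], [w₁, w₂, (w₁w₂)⁻¹]] has a nonzero kernel vector (equivalently, the Kasteleyn complex C•(G, ∇) has nonvanishing cohomology H¹(G,∇), i.e., ∇ lies in the support of the dimer) if and only if w₁³ + w₂³ + ((w₁w₂)⁻¹)³ = 3, i.e., if and only if z₁ + z₂ + (z₁z₂)⁻¹ = 3 where z₁ = w₁³, z₂ = w₂³. -/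
/-- The Kasteleyn matrix of the hexagonal dimer for `ℂP²` has a nonzero kernel
vector (the local system lies in the support of the dimer) if and only if
`w₁³ + w₂³ + ((w₁w₂)⁻¹)³ = 3`, i.e. `z₁ + z₂ + (z₁z₂)⁻¹ = 3` for the holonomies
`z₁ = w₁³`, `z₂ = w₂³`. -/
theorem kasteleyn_kernel_iff_support (w₁ w₂ : ℂ) (h₁ : w₁ ≠ 0) (h₂ : w₂ ≠ 0) :
    ((∃ v : Fin 3 → ℂ, v ≠ 0 ∧
        Matrix.mulVec !![w₂, (w₁ * w₂)⁻¹, w₁;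
                         (w₁ * w₂)⁻¹, w₁, w₂;
                         w₁, w₂, (w₁ * w₂)⁻¹] v = 0) ↔
      w₁ ^ 3 + w₂ ^ 3 + ((w₁ * w₂)⁻¹) ^ 3 = 3) ∧
    (w₁ ^ 3 + w₂ ^ 3 + ((w₁ * w₂)⁻¹) ^ 3 = 3 ↔
      w₁ ^ 3 + w₂ ^ 3 + (w₁ ^ 3 * w₂ ^ 3)⁻¹ = 3) := by
  have key : ((w₁ * w₂)⁻¹) ^ 3 = (w₁ ^ 3 * w₂ ^ 3)⁻¹ := by
    rw [← mul_pow, inv_pow]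
  refine ⟨?_, by rw [key]⟩
  rw [Matrix.exists_mulVec_eq_zero_iff]
  have hd : (!![w₂, (w₁ * w₂)⁻¹, w₁;
                (w₁ * w₂)⁻¹, w₁, w₂;
                w₁, w₂, (w₁ * w₂)⁻¹] : Matrix (Fin 3) (Fin 3) ℂ).det
      = 3 - (w₁ ^ 3 + w₂ ^ 3 + ((w₁ * w₂)⁻¹) ^ 3) := by
    have hu : (w₁ * w₂)⁻¹ * (w₁ * w₂) = 1 := inv_mul_cancel₀ (mul_ne_zero h₁ h₂)
    rw [Matrix.det_fin_three]
    simp only [Matrix.of_apply, Matrix.cons_val', Matrix.cons_val_zero, Matrix.cons_val_one, Matrix.cons_val_two, Matrix.empty_val', Matrix.cons_val_fin_one, Matrix.tail_cons, Matrix.vecHead]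
    linear_combination 3 * hu
  rw [hd, sub_eq_zero, eq_comm]
end
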